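/- Let μ be a symmetric probability measure on ℝ, not a Dirac mass, let h(s) = ∫ s/(s²+u²) dμ(u), and fix r > 0 and t > 0. Then s ∈ (t,∞) satisfies (s−t)² − (s−t)/h(s) + r² = 0 if and only if k(s,t) = r², where k(s,t) = (s−t)(1/h(s) − s + t); consequently this equation has a unique solution s(r,t) ∈ (t,∞). -/

import Mathlib

open MeasureTheory Set

/-- `h μ s = ∫ s/(s² + u²) dμ(u)`. -/
noncomputable def hfun (μ : MeasureTheory.Measure ℝ) (s : ℝ) : ℝ :=
  ∫ u, s / (s ^ 2 + u ^ 2) ∂μ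

/-- `k(s,t) = (s−t)(1/h(s) − s + t)`. -/
noncomputable def kfun (μ : MeasureTheory.Measure ℝ) (s t : ℝ) : ℝ :=
  (s - t) * (1 / hfun μ s - s + t)

section Aux

variable {μ : MeasureTheory.Measure ℝ} [IsProbabilityMeasure μ]

lemma ffun_pos {s : ℝ} (hs : 0 < s) (u : ℝ) : 0 < s / (s ^ 2 + u ^ 2) := by positivity

lemma ffun_le {s : ℝ} (hs : 0 < s) (u : ℝ) : s / (s ^ 2 + u ^ 2) ≤ 1 / s := by
  rw [div_le_div_iff₀ (by positivity) hs]
  nlinarith [sq_nonneg u]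

lemma ffun_meas (μ : MeasureTheory.Measure ℝ) (s : ℝ) :
    AEStronglyMeasurable (fun u : ℝ => s / (s ^ 2 + u ^ 2)) μ :=
  (measurable_const.div (by fun_prop)).aestronglyMeasurable

lemma ffun_int {s : ℝ} (hs : 0 < s) :
    Integrable (fun u : ℝ => s / (s ^ 2 + u ^ 2)) μ := by
  refine (integrable_const (1 / s)).mono' (ffun_meas μ s) (ae_of_all _ fun u => ?_)
  rw [Real.norm_eq_abs, abs_of_pos (ffun_pos hs u)]
  exact ffun_le hs u

lemma hfun_pos {s : ℝ} (hs : 0 < s) : 0 < hfun μ s := by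
  rw [hfun, integral_pos_iff_support_of_nonneg_ae
    (ae_of_all _ fun u => (ffun_pos hs u).le) (ffun_int hs)]
  have : Function.support (fun u : ℝ => s / (s ^ 2 + u ^ 2)) = univ := by
    ext u; simp only [Function.mem_support]
    exact iff_of_true (ffun_pos hs u).ne' (mem_univ u)
  simp [this]

lemma hfun_le {s : ℝ} (hs : 0 < s) : hfun μ s ≤ 1 / s := by
  have := integral_mono (μ := μ) (ffun_int hs) (integrable_const (1 / s)) (ffun_le hs)
  simpa [hfun] using this

lemma hfun_contAt {s₀ : ℝ} (hs : 0 < s₀) : ContinuousAt (hfun μ) s₀ := by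
  refine continuousAt_of_dominated (bound := fun _ => 2 / s₀)
    (Filter.Eventually.of_forall fun s => ffun_meas μ s) ?_ (integrable_const _) ?_
  · filter_upwards [Ioi_mem_nhds (show s₀ / 2 < s₀ by linarith)] with s hs'
    refine ae_of_all _ fun u => ?_
    have hsp : 0 < s := lt_trans (by linarith) hs'
    rw [Real.norm_eq_abs, abs_of_pos (ffun_pos hsp u)]
    calc s / (s ^ 2 + u ^ 2) ≤ 1 / s := ffun_le hsp u
    _ ≤ 2 / s₀ := by rw [div_le_div_iff₀ hsp (by linarith)]; nlinarith [mem_Ioi.mp hs']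
  · refine ae_of_all _ fun u => ?_
    exact (continuousAt_id.div (by fun_prop) (by positivity))

/-- Chebyshev association inequality for comonotone bounded functions. -/
lemma chebyshev_corr (f g : ℝ → ℝ) (hf : Integrable f μ) (hg : Integrable g μ)
    (hfg : Integrable (fun u => f u * g u) μ)
    (hmono : ∀ u v, 0 ≤ (f u - f v) * (g u - g v)) :
    (∫ u, f u ∂μ) * (∫ u, g u ∂μ) ≤ ∫ u, f u * g u ∂μ := by
  set P := μ.prod μ
  have hP : IsProbabilityMeasure P := by infer_instance
  have i1 : Integrable (fun p : ℝ × ℝ => (f p.1 * g p.1) * (1 : ℝ)) P := by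
    simpa using hfg.mul_prod (integrable_const (1:ℝ))
  have i2 : Integrable (fun p : ℝ × ℝ => (1 : ℝ) * (f p.2 * g p.2)) P := by
    simpa using (integrable_const (1:ℝ)).mul_prod hfg
  have i3 : Integrable (fun p : ℝ × ℝ => f p.1 * g p.2) P := hf.mul_prod hg
  have i4 : Integrable (fun p : ℝ × ℝ => g p.1 * f p.2) P := hg.mul_prod hf
  have key : (0:ℝ) ≤ ∫ p : ℝ × ℝ, (f p.1 - f p.2) * (g p.1 - g p.2) ∂P :=
    integral_nonneg fun p => hmono p.1 p.2
  have expand : ∀ p : ℝ × ℝ, (f p.1 - f p.2) * (g p.1 - g p.2)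
      = (f p.1 * g p.1) * (1:ℝ) + (1:ℝ) * (f p.2 * g p.2)
        - (f p.1 * g p.2 + g p.1 * f p.2) := fun p => by ring
  rw [show (fun p : ℝ × ℝ => (f p.1 - f p.2) * (g p.1 - g p.2))
      = fun p : ℝ × ℝ => (f p.1 * g p.1) * (1:ℝ) + (1:ℝ) * (f p.2 * g p.2)
        - (f p.1 * g p.2 + g p.1 * f p.2) from funext expand] at key
  have i12 : Integrable (fun p : ℝ × ℝ => (f p.1 * g p.1) * (1:ℝ) + (1:ℝ) * (f p.2 * g p.2)) P :=
    i1.add i2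
  have i34 : Integrable (fun p : ℝ × ℝ => f p.1 * g p.2 + g p.1 * f p.2) P := i3.add i4
  rw [integral_sub i12 i34, integral_add i1 i2, integral_add i3 i4,
    integral_prod_mul (f := fun u => f u * g u) (g := fun _ => (1:ℝ)),
    integral_prod_mul (f := fun _ => (1:ℝ)) (g := fun u => f u * g u),
    integral_prod_mul (f := f) (g := g), integral_prod_mul (f := g) (g := f)] at key
  simp only [integral_const, measure_univ, Measure.real, ENNReal.toReal_one, smul_eq_mul, one_mul, mul_one] at key
  linarith

lemma kfun_eq (μ : MeasureTheory.Measure ℝ) (s t : ℝ) :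
    kfun μ s t = (s - t) / hfun μ s - (s - t) ^ 2 := by
  rw [kfun]; ring

lemma kfun_mono {t s1 s2 : ℝ} (ht : 0 < t) (h1 : t < s1) (h2 : s1 < s2) :
    kfun μ s1 t < kfun μ s2 t := by
  have hs1 : 0 < s1 := ht.trans h1
  have hs2 : 0 < s2 := hs1.trans h2
  have hd1 : ∀ u : ℝ, (0:ℝ) < s1 ^ 2 + u ^ 2 := fun u => by positivity
  have hd2 : ∀ u : ℝ, (0:ℝ) < s2 ^ 2 + u ^ 2 := fun u => by positivity
  set g1 : ℝ → ℝ := fun u => s1 * s2 / ((s1 ^ 2 + u ^ 2) * (s2 ^ 2 + u ^ 2)) with hg1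
  set g2 : ℝ → ℝ := fun u => u ^ 2 / ((s1 ^ 2 + u ^ 2) * (s2 ^ 2 + u ^ 2)) with hg2
  have g1meas : AEStronglyMeasurable g1 μ :=
    (measurable_const.div (by fun_prop)).aestronglyMeasurable
  have g2meas : AEStronglyMeasurable g2 μ :=
    ((measurable_id.pow_const 2).div (by fun_prop)).aestronglyMeasurable
  have g1int : Integrable g1 μ := by
    refine (integrable_const (1 / (s1 * s2))).mono' g1meas (ae_of_all _ fun u => ?_)
    have hp : (0:ℝ) < s1 * s2 / ((s1 ^ 2 + u ^ 2) * (s2 ^ 2 + u ^ 2)) := by positivity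
    rw [Real.norm_eq_abs, abs_of_pos hp, div_le_div_iff₀ (by positivity) (by positivity)]
    nlinarith [sq_nonneg u, sq_nonneg (u*u), mul_pos hs1 hs2, sq_nonneg (s1*u), sq_nonneg (s2*u)]
  have g2int : Integrable g2 μ := by
    refine (integrable_const (1 / s1 ^ 2)).mono' g2meas (ae_of_all _ fun u => ?_)
    have hp : (0:ℝ) ≤ u ^ 2 / ((s1 ^ 2 + u ^ 2) * (s2 ^ 2 + u ^ 2)) := by positivity
    rw [Real.norm_eq_abs, abs_of_nonneg hp, div_le_div_iff₀ (by positivity) (by positivity)]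
    nlinarith [sq_nonneg u, sq_nonneg (u*u), sq_nonneg (s2*u)]
  set A := ∫ u, g1 u ∂μ with hA
  set B := ∫ u, g2 u ∂μ with hB
  have hApos : 0 < A := by
    rw [hA, integral_pos_iff_support_of_nonneg_ae
      (ae_of_all _ fun u => by positivity) g1int]
    have : Function.support g1 = univ := by
      ext u; simp only [Function.mem_support]
      exact iff_of_true (by positivity) (mem_univ u)
    simp [this]
  have hBnn : 0 ≤ B := integral_nonneg fun u => by positivity
  -- Chebyshev
  have hcheb : hfun μ s1 * hfun μ s2 ≤ A := by
    have e : ∀ u : ℝ, (s1 / (s1 ^ 2 + u ^ 2)) * (s2 / (s2 ^ 2 + u ^ 2)) = g1 u := fun u => by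
      rw [hg1, div_mul_div_comm]
    have := chebyshev_corr (μ := μ) (fun u => s1 / (s1 ^ 2 + u ^ 2))
      (fun u => s2 / (s2 ^ 2 + u ^ 2)) (ffun_int hs1) (ffun_int hs2)
      (by simpa only [e] using g1int) ?_
    · rw [hA]; simp only [← e]; exact this
    · intro u v
      rcases le_total (u ^ 2) (v ^ 2) with h | h
      · apply mul_nonneg <;> rw [sub_nonneg] <;>
          exact div_le_div_of_nonneg_left (by positivity) (by positivity) (by linarith)
      · have e1 : s1 / (s1 ^ 2 + u ^ 2) ≤ s1 / (s1 ^ 2 + v ^ 2) :=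
          div_le_div_of_nonneg_left (by positivity) (by positivity) (by linarith)
        have e2 : s2 / (s2 ^ 2 + u ^ 2) ≤ s2 / (s2 ^ 2 + v ^ 2) :=
          div_le_div_of_nonneg_left (by positivity) (by positivity) (by linarith)
        nlinarith
  -- linear combination identity
  have hint : (s2 - t) * hfun μ s1 - (s1 - t) * hfun μ s2
      = (s2 - s1) * ((s1 + s2 - t) * A + t * B) := by
    have e : ∀ u : ℝ, (s2 - t) * (s1 / (s1 ^ 2 + u ^ 2)) - (s1 - t) * (s2 / (s2 ^ 2 + u ^ 2))
        = (s2 - s1) * ((s1 + s2 - t) * g1 u + t * g2 u) := fun u => by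
      rw [hg1, hg2]
      field_simp
      ring
    rw [hfun, hfun, ← integral_const_mul, ← integral_const_mul,
      ← integral_sub (((ffun_int hs1).const_mul _)) (((ffun_int hs2).const_mul _))]
    simp only [e]
    rw [integral_const_mul, integral_add ((g1int.const_mul _)) ((g2int.const_mul _)),
      integral_const_mul, integral_const_mul, ← hA, ← hB]
  -- conclude
  have hh1 : 0 < hfun μ s1 := hfun_pos hs1
  have hh2 : 0 < hfun μ s2 := hfun_pos hs2
  have hnum : ((s2 - t) * hfun μ s1 - (s1 - t) * hfun μ s2)
      - ((s2 - t) ^ 2 - (s1 - t) ^ 2) * (hfun μ s1 * hfun μ s2) > 0 := by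
    rw [hint]
    have h21 : 0 < s2 - s1 := by linarith
    nlinarith [mul_pos h21 (mul_pos ht hApos), mul_nonneg (mul_nonneg h21.le ht.le) hBnn,
      mul_nonneg (mul_nonneg h21.le (by linarith : (0:ℝ) ≤ s1 + s2 - 2*t))
        (sub_nonneg.mpr hcheb)]
  have hdiff : kfun μ s2 t - kfun μ s1 t
      = (((s2 - t) * hfun μ s1 - (s1 - t) * hfun μ s2)
        - ((s2 - t) ^ 2 - (s1 - t) ^ 2) * (hfun μ s1 * hfun μ s2)) / (hfun μ s1 * hfun μ s2) := by
    rw [kfun_eq, kfun_eq]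
    field_simp
    ring
  have := div_pos hnum (mul_pos hh1 hh2)
  linarith [hdiff ▸ this]

lemma kfun_contAt {t s₀ : ℝ} (hs : 0 < s₀) :
    ContinuousAt (fun s => kfun μ s t) s₀ := by
  have hc := hfun_contAt (μ := μ) hs
  have hne := (hfun_pos (μ := μ) hs).ne'
  simp only [kfun]
  exact (continuousAt_id.sub continuousAt_const).mul
    (((continuousAt_const.div hc hne).sub continuousAt_id).add continuousAt_const)

end Aux

/-- For a symmetric non-Dirac probability measure `μ` on `ℝ`, `r, t > 0`:
for `s ∈ (t,∞)` the equation `(s−t)² − (s−t)/h(s) + r² = 0` is equivalent to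
`k(s,t) = r²`, and this equation has a unique solution `s ∈ (t,∞)`. -/
theorem stmt5 (μ : MeasureTheory.Measure ℝ) [IsProbabilityMeasure μ]
    (hsym : μ.map (fun u => -u) = μ)
    (hnd : ∀ c : ℝ, μ ≠ MeasureTheory.Measure.dirac c)
    (r t : ℝ) (hr : 0 < r) (ht : 0 < t) :
    (∀ s ∈ Ioi t,
        ((s - t) ^ 2 - (s - t) / hfun μ s + r ^ 2 = 0 ↔ kfun μ s t = r ^ 2)) ∧
      ∃! s : ℝ, s ∈ Ioi t ∧ (s - t) ^ 2 - (s - t) / hfun μ s + r ^ 2 = 0 := by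
  have hiff : ∀ s : ℝ,
      ((s - t) ^ 2 - (s - t) / hfun μ s + r ^ 2 = 0 ↔ kfun μ s t = r ^ 2) := by
    intro s
    rw [kfun_eq]
    constructor <;> intro h <;> linarith
  refine ⟨fun s _ => hiff s, ?_⟩
  -- existence via IVT
  have hk0 : kfun μ t t = 0 := by rw [kfun]; ring
  have hcont : ContinuousAt (fun s => kfun μ s t) t := kfun_contAt ht
  have hr2 : (0:ℝ) < r ^ 2 := by positivity
  have hsmall : ∀ᶠ s in nhdsWithin t (Ioi t), kfun μ s t < r ^ 2 := by
    have : Filter.Tendsto (fun s => kfun μ s t) (nhdsWithin t (Ioi t)) (nhds 0) := by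
      rw [← hk0]
      exact (hcont.continuousWithinAt).tendsto
    exact this.eventually_lt_const hr2
  set b : ℝ := t + (r ^ 2 + 1) / t with hbdef
  have hbt : t < b := by
    have : 0 < (r ^ 2 + 1) / t := by positivity
    simp [hbdef]; linarith
  have hbpos : 0 < b := ht.trans hbt
  have hkb : r ^ 2 < kfun μ b t := by
    have hhb : 0 < hfun μ b := hfun_pos hbpos
    have h1 : hfun μ b ≤ 1 / b := hfun_le hbpos
    have h2 : b ≤ 1 / hfun μ b := by
      have := one_div_le_one_div_of_le hhb h1
      rwa [one_div_one_div] at this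
    have h3 : (b - t) * t ≤ kfun μ b t := by
      rw [kfun]
      have hbt' : 0 ≤ b - t := by linarith
      nlinarith [mul_nonneg hbt' (by linarith : (0:ℝ) ≤ 1 / hfun μ b - b)]
    have h4 : (b - t) * t = r ^ 2 + 1 := by
      rw [hbdef]; field_simp; ring
    nlinarith
  obtain ⟨a, haf, hab⟩ := (hsmall.and
    (Ioo_mem_nhdsGT hbt)).exists
  obtain ⟨hka, hta, habb⟩ : kfun μ a t < r ^ 2 ∧ t < a ∧ a < b := ⟨haf, hab.1, hab.2⟩
  have hcontOn : ContinuousOn (fun s => kfun μ s t) (Icc a b) := fun s hs =>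
    (kfun_contAt (lt_of_lt_of_le (ht.trans hta) hs.1)).continuousWithinAt
  have hsub : Icc (kfun μ a t) (kfun μ b t) ⊆ (fun s => kfun μ s t) '' Icc a b :=
    intermediate_value_Icc habb.le hcontOn
  obtain ⟨c, hcmem, hceq⟩ := hsub ⟨hka.le, hkb.le⟩
  have hct : t < c := lt_of_lt_of_le hta hcmem.1
  have hkc : kfun μ c t = r ^ 2 := hceq
  refine ⟨c, ⟨hct, (hiff c).mpr hkc⟩, ?_⟩
  rintro y ⟨hyt, hyeq⟩
  have hky : kfun μ y t = r ^ 2 := (hiff y).mp hyeq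
  rcases lt_trichotomy y c with h | h | h
  · have := kfun_mono (μ := μ) ht hyt h
    rw [hky, hkc] at this
    exact absurd this (lt_irrefl _)
  · exact h
  · have := kfun_mono (μ := μ) ht hct h
    rw [hky, hkc] at this
    exact absurd this (lt_irrefl _)
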